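/- For every μ with 1/2 < μ ≤ 1, the commuter h_μ : [0,1] → [0,1] is monotone increasing; that is, x ≤ y implies h_μ(x) ≤ h_μ(y) for all x, y ∈ [0,1]. -/
import Mathlib


open Set

/-- `h : [0,1] → [0,1]` satisfies the commuter functional equation for `T_μ`:
`h(x) = (1/2)·h(2μx)` for `0 ≤ x ≤ 1/2` and `h(x) = 1 - (1/2)·h(2μ(1-x))` for `1/2 < x ≤ 1`. -/
def IsCommuter (μ : ℝ) (h : ℝ → ℝ) : Prop :=
  (∀ x ∈ Icc (0:ℝ) 1, h x ∈ Icc (0:ℝ) 1) ∧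
  (∀ x : ℝ, 0 ≤ x → x ≤ 1/2 → h x = (1/2) * h (2*μ*x)) ∧
  (∀ x : ℝ, 1/2 < x → x ≤ 1 → h x = 1 - (1/2) * h (2*μ*(1-x)))

/-- For `1/2 < μ ≤ 1`, the commuter `h_μ` is monotone increasing on `[0,1]`. -/
theorem commuter_monotoneOn (μ : ℝ) (hμ1 : 1/2 < μ) (hμ2 : μ ≤ 1)
    (h : ℝ → ℝ) (hc : IsCommuter μ h) :
    MonotoneOn h (Icc (0:ℝ) 1) := by
  obtain ⟨hmap, hL, hR⟩ := hc
  have hμ0 : (0:ℝ) < μ := by linarith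
  have key : ∀ n : ℕ, ∀ x ∈ Icc (0:ℝ) 1, ∀ y ∈ Icc (0:ℝ) 1, x ≤ y →
      h x ≤ h y + (1/2)^n := by
    intro n
    induction n with
    | zero =>
      intro x hx y hy _
      have h1 := (hmap x hx).2
      have h2 := (hmap y hy).1
      simp only [pow_zero]
      linarith
    | succ n ih =>
      intro x hx y hy hxy
      obtain ⟨hx0, hx1⟩ := hx
      obtain ⟨hy0, hy1⟩ := hy
      rcases le_or_gt y (1/2) with hy2 | hy2
      · -- both in [0, 1/2]
        have hx2 : x ≤ 1/2 := le_trans hxy hy2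
        have hx' : 2*μ*x ∈ Icc (0:ℝ) 1 :=
          ⟨by positivity, by nlinarith⟩
        have hy' : 2*μ*y ∈ Icc (0:ℝ) 1 :=
          ⟨by positivity, by nlinarith⟩
        have hle : 2*μ*x ≤ 2*μ*y := by nlinarith
        have := ih _ hx' _ hy' hle
        rw [hL x hx0 hx2, hL y hy0 hy2]
        have : h (2*μ*x) ≤ h (2*μ*y) + (1/2)^n := this
        rw [pow_succ]
        linarith
      · rcases le_or_gt x (1/2) with hx2 | hx2
        · -- mixed case : h x ≤ 1/2 ≤ h y
          have hx' : 2*μ*x ∈ Icc (0:ℝ) 1 :=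
            ⟨by positivity, by nlinarith⟩
          have hy' : 2*μ*(1-y) ∈ Icc (0:ℝ) 1 :=
            ⟨by nlinarith, by nlinarith⟩
          have h1 := (hmap _ hx').2
          have h2 := (hmap _ hy').2
          rw [hL x hx0 hx2, hR y hy2 hy1]
          have hp : (0:ℝ) < (1/2)^(n+1) := by positivity
          linarith
        · -- both in (1/2, 1]
          have hx' : 2*μ*(1-y) ∈ Icc (0:ℝ) 1 :=
            ⟨by nlinarith, by nlinarith⟩
          have hy' : 2*μ*(1-x) ∈ Icc (0:ℝ) 1 :=
            ⟨by nlinarith, by nlinarith⟩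
          have hle : 2*μ*(1-y) ≤ 2*μ*(1-x) := by nlinarith
          have := ih _ hx' _ hy' hle
          rw [hR x hx2 hx1, hR y hy2 hy1]
          rw [pow_succ]
          linarith
  intro x hx y hy hxy
  refine le_of_forall_pos_le_add ?_
  intro ε hε
  obtain ⟨n, hn⟩ := exists_pow_lt_of_lt_one hε (by norm_num : (1/2:ℝ) < 1)
  have := key n x hx y hy hxy
  linarith
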